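/- arXiv:2412.11235 — 2 statements merged into one kernel-verified Lean document; each statement's English description precedes it below -/
import Mathlib

section
/- Let N be the monomial ideal generated by all β_A for (m−1)-element subsets A ⊆ {2,…,n}. Then for every s ≥ 1, N^s is generated by the products ∏_{k=1}^s β_{A_k} taken over chains A₁ ≤ A₂ ≤ … ≤ A_s of (m−1)-element subsets of {2,…,n}. -/
open MvPolynomial Finset

/-- The set `V = {(i,j) ∈ [m]×[n] : m−i < j ≤ n−i+1}` (1-based indices). -/
def Vset (m n : ℕ) : Finset (ℕ × ℕ) :=
  ((Finset.Icc 1 m) ×ˢ (Finset.Icc 1 n)).filter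
    (fun p => m - p.1 < p.2 ∧ p.2 ≤ n - p.1 + 1)

/-- `a : ℕ → ℕ` represents an `(m−1)`-element subset `A = {a 1 < … < a (m−1)} ⊆ {2,…,n}`,
together with the conventions `a 0 = 1` and `a m = n + 1`. -/
def SubsetRep (m n : ℕ) (a : ℕ → ℕ) : Prop :=
  a 0 = 1 ∧ a m = n + 1 ∧ ∀ i < m, a i < a (i + 1)

/-- The region `D_A = {(i,j) ∈ V : a_{m−i} ≤ j < a_{m−i+1}}`. -/
def Dset (m n : ℕ) (a : ℕ → ℕ) : Finset (ℕ × ℕ) :=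
  (Vset m n).filter (fun p => a (m - p.1) ≤ p.2 ∧ p.2 < a (m - p.1 + 1))

variable (K : Type*) [Field K]

/-- The squarefree monomial `β_A = ∏_{(i,j) ∈ V ∖ D_A} x_{i,j}`. -/
noncomputable def betaM (m n : ℕ) (a : ℕ → ℕ) : MvPolynomial (ℕ × ℕ) K :=
  ∏ p ∈ Vset m n \ Dset m n a, X p

/-- The antidiagonal monomial `α_j = ∏_{i=1}^m x_{m−i+1, j+i−1}`. -/
noncomputable def alphaM (m : ℕ) (j : ℕ) : MvPolynomial (ℕ × ℕ) K :=
  ∏ i ∈ Finset.Icc 1 m, X (m - i + 1, j + i - 1)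

/-- The ideal `N` generated by the monomials `β_A` for all `(m−1)`-element subsets
`A ⊆ {2,…,n}`. -/
noncomputable def Nideal (m n : ℕ) : Ideal (MvPolynomial (ℕ × ℕ) K) :=
  Ideal.span { f | ∃ a : ℕ → ℕ, SubsetRep m n a ∧ f = betaM K m n a }

/-- `A k`, `1 ≤ k ≤ s`, is a chain `A₁ ≤ … ≤ A_s` of `(m−1)`-element subsets of `{2,…,n}`,
where `≤` is the componentwise partial order. -/
def BetaChain (m n s : ℕ) (A : ℕ → ℕ → ℕ) : Prop :=
  (∀ k, 1 ≤ k → k ≤ s → SubsetRep m n (A k)) ∧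
    (∀ k, 1 ≤ k → k + 1 ≤ s → ∀ i ≤ m, A k i ≤ A (k + 1) i)

/-- `W^{[2]}` : the ideal generated by the squares of all the monomials in `W`. -/
noncomputable def bracketTwo {σ : Type*} (W : Ideal (MvPolynomial σ K)) :
    Ideal (MvPolynomial σ K) :=
  Ideal.span { g | ∃ d : σ →₀ ℕ, (monomial d (1 : K)) ∈ W ∧ g = (monomial d (1 : K)) ^ 2 }

/-- The symbolic power `I^{(n)} = ⋂_{p ∈ Min(I)} (pⁿ R_p ∩ R)`. -/
noncomputable def symbolicPower {R : Type*} [CommRing R] (I : Ideal R) (n : ℕ) : Ideal R :=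
  ⨅ p : {q : Ideal R // q ∈ I.minimalPrimes},
    letI : p.1.IsPrime := p.2.1.1
    ((p.1 ^ n).map (algebraMap R (Localization.AtPrime p.1))).comap
      (algebraMap R (Localization.AtPrime p.1))

private lemma prod_Icc_shift {M : Type*} [CommMonoid M] (f : ℕ → M) (s : ℕ) :
    ∏ k ∈ Finset.Icc 1 (s + 1), f k = f 1 * ∏ k ∈ Finset.Icc 1 s, f (k + 1) := by
  induction s with
  | zero => simp
  | succ s ih =>
      rw [Finset.prod_Icc_succ_top (by omega : 1 ≤ s + 1 + 1), ih,
        Finset.prod_Icc_succ_top (by omega : 1 ≤ s + 1)]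
      exact mul_assoc _ _ _

private lemma subsetRep_min {m n : ℕ} {a b : ℕ → ℕ} (ha : SubsetRep m n a)
    (hb : SubsetRep m n b) : SubsetRep m n (fun i => min (a i) (b i)) := by
  obtain ⟨ha0, ham, hai⟩ := ha
  obtain ⟨hb0, hbm, hbi⟩ := hb
  refine ⟨by simp [ha0, hb0], by simp [ham, hbm], fun i hi => ?_⟩
  have h1 := hai i hi
  have h2 := hbi i hi
  simp only
  omega

private lemma subsetRep_max {m n : ℕ} {a b : ℕ → ℕ} (ha : SubsetRep m n a)
    (hb : SubsetRep m n b) : SubsetRep m n (fun i => max (a i) (b i)) := by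
  obtain ⟨ha0, ham, hai⟩ := ha
  obtain ⟨hb0, hbm, hbi⟩ := hb
  refine ⟨by simp [ha0, hb0], by simp [ham, hbm], fun i hi => ?_⟩
  have h1 := hai i hi
  have h2 := hbi i hi
  simp only
  omega

private lemma betaM_eq (m n : ℕ) (a : ℕ → ℕ) :
    betaM K m n a = ∏ p ∈ Vset m n,
      if ¬ (a (m - p.1) ≤ p.2 ∧ p.2 < a (m - p.1 + 1)) then (X p : MvPolynomial (ℕ × ℕ) K)
      else 1 := by
  rw [betaM, Dset, ← Finset.filter_not, Finset.prod_filter]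

private lemma beta_mul (m n : ℕ) (a b : ℕ → ℕ) (ha : SubsetRep m n a) (hb : SubsetRep m n b) :
    betaM K m n a * betaM K m n b
      = betaM K m n (fun i => min (a i) (b i)) * betaM K m n (fun i => max (a i) (b i)) := by
  rw [betaM_eq, betaM_eq, betaM_eq, betaM_eq, ← Finset.prod_mul_distrib,
    ← Finset.prod_mul_distrib]
  refine Finset.prod_congr rfl fun p hp => ?_
  have hp1 : 1 ≤ p.1 ∧ p.1 ≤ m := by
    simp only [Vset, Finset.mem_filter, Finset.mem_product, Finset.mem_Icc] at hp
    exact hp.1.1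
  have h1 := ha.2.2 (m - p.1) (by omega)
  have h2 := hb.2.2 (m - p.1) (by omega)
  split_ifs <;> first | ring1 | (exfalso; omega)

private lemma chain_mono {m n s : ℕ} {A : ℕ → ℕ → ℕ} (hA : BetaChain m n s A)
    (i : ℕ) (hi : i ≤ m) :
    ∀ k j, 1 ≤ j → j ≤ k → k ≤ s → A j i ≤ A k i := by
  intro k
  induction k with
  | zero => intro j h1 h2 _; omega
  | succ k ih =>
    intro j h1 h2 h3
    rcases Nat.lt_or_ge j (k + 1) with h | h
    · exact le_trans (ih j h1 (by omega) (by omega)) (hA.2 k (by omega) (by omega) i hi)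
    · have : j = k + 1 := by omega
      subst this
      exact le_rfl

private lemma straighten (m n : ℕ) : ∀ (s : ℕ) (b : ℕ → ℕ), SubsetRep m n b →
    ∀ A : ℕ → ℕ → ℕ, BetaChain m n s A →
    ∃ C : ℕ → ℕ → ℕ, BetaChain m n (s + 1) C ∧
      (∀ i ≤ m, ∀ c : ℕ, c ≤ b i → (∀ k, 1 ≤ k → k ≤ s → c ≤ A k i) → c ≤ C 1 i) ∧
      betaM K m n b * ∏ k ∈ Finset.Icc 1 s, betaM K m n (A k)
        = ∏ k ∈ Finset.Icc 1 (s + 1), betaM K m n (C k) := by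
  intro s
  induction s with
  | zero =>
    intro b hb A _
    refine ⟨fun _ => b, ⟨fun k _ _ => hb, fun k h1 h2 => by omega⟩,
      fun i hi c hc _ => hc, by simp⟩
  | succ s ih =>
    intro b hb A hA
    have hA1 : SubsetRep m n (A 1) := hA.1 1 le_rfl (by omega)
    have hb' : SubsetRep m n (fun i => max (b i) (A 1 i)) := subsetRep_max hb hA1
    have hA' : BetaChain m n s (fun k => A (k + 1)) :=
      ⟨fun k h1 h2 => hA.1 (k + 1) (by omega) (by omega),
       fun k h1 h2 i hi => hA.2 (k + 1) (by omega) (by omega) i hi⟩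
    obtain ⟨C', hC', hC'1, hprod⟩ := ih (fun i => max (b i) (A 1 i)) hb' _ hA'
    refine ⟨fun k => if k = 1 then (fun i => min (b i) (A 1 i)) else C' (k - 1), ?_, ?_, ?_⟩
    · constructor
      · intro k h1 h2
        by_cases h : k = 1
        · subst h
          simpa using subsetRep_min hb hA1
        · have e : (if k = 1 then (fun i => min (b i) (A 1 i)) else C' (k - 1)) = C' (k - 1) :=
            if_neg h
          beta_reduce
          rw [e]
          exact hC'.1 (k - 1) (by omega) (by omega)
      · intro k h1 h2 i hi
        by_cases h : k = 1
        · subst h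
          have e1 : (if (1 : ℕ) = 1 then (fun i => min (b i) (A 1 i)) else C' (1 - 1)) i
              = min (b i) (A 1 i) := by rw [if_pos rfl]
          have e2 : (if (1 + 1 : ℕ) = 1 then (fun i => min (b i) (A 1 i)) else C' (1 + 1 - 1)) i
              = C' 1 i := by rw [if_neg (by omega : ¬ (1 + 1 : ℕ) = 1)]
          beta_reduce
          rw [e1, e2]
          refine hC'1 i hi _ (by omega) fun k' hk1 hk2 => ?_
          have hmono : A 1 i ≤ A (k' + 1) i :=
            chain_mono hA i hi (k' + 1) 1 le_rfl (by omega) (by omega)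
          omega
        · have e1 : (if k = 1 then (fun i => min (b i) (A 1 i)) else C' (k - 1)) i
              = C' (k - 1) i := by rw [if_neg h]
          have e2 : (if k + 1 = 1 then (fun i => min (b i) (A 1 i)) else C' (k + 1 - 1)) i
              = C' k i := by rw [if_neg (by omega : ¬ k + 1 = 1)]; norm_num
          beta_reduce
          rw [e1, e2]
          have := hC'.2 (k - 1) (by omega) (by omega) i hi
          rwa [show k - 1 + 1 = k by omega] at this
    · intro i hi c hc1 hc2
      have e1 : (if (1 : ℕ) = 1 then (fun i => min (b i) (A 1 i)) else C' (1 - 1)) i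
          = min (b i) (A 1 i) := by rw [if_pos rfl]
      beta_reduce
      rw [e1]
      have := hc2 1 le_rfl (by omega)
      omega
    · have hshiftA : ∏ k ∈ Finset.Icc 1 (s + 1), betaM K m n (A k)
          = betaM K m n (A 1) * ∏ k ∈ Finset.Icc 1 s, betaM K m n (A (k + 1)) :=
        prod_Icc_shift (fun k => betaM K m n (A k)) s
      have hshiftC : ∏ k ∈ Finset.Icc 1 (s + 1 + 1),
            betaM K m n (if k = 1 then (fun i => min (b i) (A 1 i)) else C' (k - 1))
          = betaM K m n (fun i => min (b i) (A 1 i))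
            * ∏ k ∈ Finset.Icc 1 (s + 1), betaM K m n (C' k) := by
        rw [prod_Icc_shift
          (fun k => betaM K m n (if k = 1 then (fun i => min (b i) (A 1 i)) else C' (k - 1)))
          (s + 1)]
        congr 1
        refine Finset.prod_congr rfl fun k hk => ?_
        have hk1 : 1 ≤ k := (Finset.mem_Icc.mp hk).1
        rw [if_neg (by omega : ¬ k + 1 = 1), Nat.add_sub_cancel]
      rw [hshiftA, hshiftC, ← hprod, ← mul_assoc, beta_mul K m n b (A 1) hb hA1]
      ring

private lemma prod_mem_pow (m n : ℕ) : ∀ (s : ℕ) (A : ℕ → ℕ → ℕ), BetaChain m n s A →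
    ∏ k ∈ Finset.Icc 1 s, betaM K m n (A k) ∈ Nideal K m n ^ s := by
  intro s
  induction s with
  | zero => intro A _; simp
  | succ s ih =>
    intro A hA
    rw [Finset.prod_Icc_succ_top (by omega : 1 ≤ s + 1), pow_succ]
    have hres : BetaChain m n s A :=
      ⟨fun k h1 h2 => hA.1 k h1 (by omega), fun k h1 h2 i hi => hA.2 k h1 (by omega) i hi⟩
    exact Ideal.mul_mem_mul (ih A hres)
      (Ideal.subset_span ⟨A (s + 1), hA.1 _ (by omega) le_rfl, rfl⟩)

/-- For every `s ≥ 1`, `N^s` is generated by the products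
`∏_{k=1}^s β_{A_k}` over chains `A₁ ≤ … ≤ A_s` of `(m−1)`-element subsets of `{2,…,n}`. -/
theorem stmt_6 (m n : ℕ) (hm : 1 ≤ m) (hmn : m ≤ n) (s : ℕ) (hs : 1 ≤ s) :
    Nideal K m n ^ s =
      Ideal.span { g | ∃ A : ℕ → ℕ → ℕ, BetaChain m n s A ∧
        g = ∏ k ∈ Finset.Icc 1 s, betaM K m n (A k) } := by
  induction s, hs using Nat.le_induction with
  | base =>
    rw [pow_one]
    apply le_antisymm
    · rw [Nideal]
      apply Ideal.span_le.mpr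
      rintro f ⟨a, ha, rfl⟩
      refine Ideal.subset_span ⟨fun _ => a, ⟨fun k _ _ => ha, fun k h1 h2 => absurd h2 (by omega)⟩,
        by simp⟩
    · apply Ideal.span_le.mpr
      rintro g ⟨A, hA, rfl⟩
      have h1 : SubsetRep m n (A 1) := hA.1 1 le_rfl le_rfl
      rw [show ∏ k ∈ Finset.Icc 1 1, betaM K m n (A k) = betaM K m n (A 1) by simp, Nideal]
      exact Ideal.subset_span ⟨A 1, h1, rfl⟩
  | succ s hs ih =>
    apply le_antisymm
    · rw [pow_succ, ih, Nideal, Ideal.span_mul_span']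
      apply Ideal.span_le.mpr
      rintro x hx
      rw [Set.mem_mul] at hx
      obtain ⟨g, ⟨A, hA, rfl⟩, f, ⟨b, hb, rfl⟩, rfl⟩ := hx
      obtain ⟨C, hC, -, heq⟩ := straighten K m n s b hb A hA
      exact Ideal.subset_span ⟨C, hC, by rw [mul_comm, heq]⟩
    · apply Ideal.span_le.mpr
      rintro g ⟨A, hA, rfl⟩
      exact prod_mem_pow K m n (s + 1) A hA
end

section
/- Let A₁ ≤ A₂ ≤ … ≤ A_{2r+1} be a chain of (m−1)-element subsets of {2,…,n}. Then (∏_{k=1}^r β_{A_{2k}})² divides ∏_{h=1}^{2r+1} β_{A_h} in the polynomial ring K[x_{i,j}]. -/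
open MvPolynomial Finset

variable (K : Type*) [Field K]

-- combinatorial key lemma
lemma key_comb (r j : ℕ) (b c : ℕ → ℕ)
    (hb : ∀ h, 1 ≤ h → h + 1 ≤ 2*r+1 → b h ≤ b (h+1))
    (hc : ∀ h, 1 ≤ h → h + 1 ≤ 2*r+1 → c h ≤ c (h+1)) :
    2 * ((Finset.Icc 1 r).filter (fun k => j < b (2*k) ∨ c (2*k) ≤ j)).card ≤
      ((Finset.Icc 1 (2*r+1)).filter (fun h => j < b h ∨ c h ≤ j)).card := by
  classical
  set E := (Finset.Icc 1 r).filter (fun k => j < b (2*k) ∨ c (2*k) ≤ j) with hE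
  set T := (Finset.Icc 1 (2*r+1)).filter (fun h => j < b h ∨ c h ≤ j) with hT
  have memE : ∀ k, k ∈ E ↔ (1 ≤ k ∧ k ≤ r) ∧ (j < b (2*k) ∨ c (2*k) ≤ j) := by
    intro k; simp [hE, Finset.mem_filter, Finset.mem_Icc]
  have memT : ∀ h, h ∈ T ↔ (1 ≤ h ∧ h ≤ 2*r+1) ∧ (j < b h ∨ c h ≤ j) := by
    intro h; simp [hT, Finset.mem_filter, Finset.mem_Icc]
  set f2 : ℕ → ℕ := fun k => if c (2*k) ≤ j then 2*k-1 else 2*k+1 with hf2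
  have h1 : (E.image (fun k => 2*k)).card = E.card :=
    Finset.card_image_of_injective _ (fun a b h => by omega)
  have h2 : (E.image f2).card = E.card := by
    apply Finset.card_image_of_injOn
    intro k hk k' hk' hkk'
    rw [Finset.mem_coe, memE] at hk
    rw [Finset.mem_coe, memE] at hk'
    simp only [hf2] at hkk'
    by_cases hck : c (2*k) ≤ j <;> by_cases hck' : c (2*k') ≤ j <;>
      simp [hck, hck'] at hkk'
    · omega
    · -- 2k-1 = 2k'+1, so k = k'+1; then c (2k') ≤ c (2k'+1) ≤ c (2k) ≤ j
      exfalso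
      have hk1 : k = k' + 1 := by omega
      have s1 : c (2*k') ≤ c (2*k'+1) := hc (2*k') (by omega) (by omega)
      have s2 : c (2*k'+1) ≤ c (2*k'+1+1) := hc (2*k'+1) (by omega) (by omega)
      have : 2*k'+1+1 = 2*k := by omega
      rw [this] at s2
      omega
    · exfalso
      have hk1 : k' = k + 1 := by omega
      have s1 : c (2*k) ≤ c (2*k+1) := hc (2*k) (by omega) (by omega)
      have s2 : c (2*k+1) ≤ c (2*k+1+1) := hc (2*k+1) (by omega) (by omega)
      have : 2*k+1+1 = 2*k' := by omega
      rw [this] at s2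
      omega
    · omega
  have hsub1 : E.image (fun k => 2*k) ⊆ T := by
    intro x hx
    obtain ⟨k, hk, rfl⟩ := Finset.mem_image.mp hx
    rw [memE] at hk
    rw [memT]
    exact ⟨⟨by omega, by omega⟩, hk.2⟩
  have hsub2 : E.image f2 ⊆ T := by
    intro x hx
    obtain ⟨k, hk, rfl⟩ := Finset.mem_image.mp hx
    rw [memE] at hk
    rw [memT]
    by_cases hck : c (2*k) ≤ j
    · simp only [hf2, if_pos hck]
      refine ⟨⟨by omega, by omega⟩, Or.inr ?_⟩
      have : c (2*k-1) ≤ c (2*k-1+1) := hc (2*k-1) (by omega) (by omega)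
      have h2k : 2*k-1+1 = 2*k := by omega
      rw [h2k] at this
      omega
    · simp only [hf2, if_neg hck]
      have hbk : j < b (2*k) := by rcases hk.2 with h | h; exact h; omega
      refine ⟨⟨by omega, by omega⟩, Or.inl ?_⟩
      have : b (2*k) ≤ b (2*k+1) := hb (2*k) (by omega) (by omega)
      omega
  have hdisj : Disjoint (E.image (fun k => 2*k)) (E.image f2) := by
    rw [Finset.disjoint_left]
    intro x hx1 hx2
    obtain ⟨k, hk, rfl⟩ := Finset.mem_image.mp hx1
    obtain ⟨k', hk', hkk'⟩ := Finset.mem_image.mp hx2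
    rw [memE] at hk'
    simp only [hf2] at hkk'
    by_cases hck' : c (2*k') ≤ j <;> simp [hck'] at hkk' <;> omega
  calc 2 * E.card = (E.image (fun k => 2*k)).card + (E.image f2).card := by omega
    _ = ((E.image (fun k => 2*k)) ∪ (E.image f2)).card :=
        (Finset.card_union_of_disjoint hdisj).symm
    _ ≤ T.card := Finset.card_le_card (Finset.union_subset hsub1 hsub2)

lemma prod_X_eq_monomial (K : Type*) [Field K] (S : Finset (ℕ × ℕ)) :
    (∏ p ∈ S, (X p : MvPolynomial (ℕ × ℕ) K)) =
      monomial (∑ p ∈ S, Finsupp.single p 1) 1 := by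
  classical
  induction S using Finset.cons_induction with
  | empty => simp
  | cons a s ha ih =>
    rw [Finset.prod_cons, Finset.sum_cons, ih, X, monomial_mul, one_mul]

lemma monomial_dvd_monomial_of_le (K : Type*) [Field K] {d e : (ℕ×ℕ) →₀ ℕ} (h : d ≤ e) :
    (monomial d (1:K)) ∣ monomial e 1 := by
  refine ⟨monomial (e - d) 1, ?_⟩
  rw [monomial_mul, one_mul, add_tsub_cancel_of_le h]

lemma prod_monomial_eq (K : Type*) [Field K] {ι : Type*} (s : Finset ι)
    (d : ι → ((ℕ×ℕ) →₀ ℕ)) :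
    ∏ i ∈ s, (monomial (d i) (1:K)) = monomial (∑ i ∈ s, d i) 1 := by
  classical
  induction s using Finset.cons_induction with
  | empty => simp
  | cons a s ha ih => rw [Finset.prod_cons, Finset.sum_cons, ih, monomial_mul, one_mul]


/-- For a chain `A₁ ≤ … ≤ A_{2r+1}`, the square of
`∏_{k=1}^r β_{A_{2k}}` divides `∏_{h=1}^{2r+1} β_{A_h}`. -/
theorem stmt_9 (m n r : ℕ) (hm : 1 ≤ m) (hmn : m ≤ n)
    (A : ℕ → ℕ → ℕ) (hA : BetaChain m n (2 * r + 1) A) :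
    (∏ k ∈ Finset.Icc 1 r, betaM K m n (A (2 * k))) ^ 2 ∣
      ∏ h ∈ Finset.Icc 1 (2 * r + 1), betaM K m n (A h) := by
  classical
  obtain ⟨hA1, hA2⟩ := hA
  set δ : (ℕ → ℕ) → ((ℕ×ℕ) →₀ ℕ) :=
    fun a => ∑ p ∈ Vset m n \ Dset m n a, Finsupp.single p 1 with hδdef
  have hbeta : ∀ a, betaM K m n a = monomial (δ a) 1 := fun a => prod_X_eq_monomial K _
  have hL : (∏ k ∈ Finset.Icc 1 r, betaM K m n (A (2 * k))) =
      monomial (∑ k ∈ Finset.Icc 1 r, δ (A (2*k))) 1 := by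
    simp_rw [hbeta]; exact prod_monomial_eq K _ _
  have hR : (∏ h ∈ Finset.Icc 1 (2*r+1), betaM K m n (A h)) =
      monomial (∑ h ∈ Finset.Icc 1 (2*r+1), δ (A h)) 1 := by
    simp_rw [hbeta]; exact prod_monomial_eq K _ _
  rw [hL, hR, sq, monomial_mul, one_mul]
  apply monomial_dvd_monomial_of_le
  rw [Finsupp.le_def]
  intro p
  have hδ : ∀ a, δ a p = if p ∈ Vset m n \ Dset m n a then 1 else 0 := by
    intro a
    simp [hδdef, Finsupp.finset_sum_apply, Finsupp.single_apply]
  simp only [Finsupp.add_apply, Finsupp.finset_sum_apply, hδ]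
  by_cases hpV : p ∈ Vset m n
  · have hmem : ∀ a : ℕ → ℕ, (p ∈ Vset m n \ Dset m n a) ↔
        (p.2 < a (m - p.1) ∨ a (m - p.1 + 1) ≤ p.2) := by
      intro a
      rw [Finset.mem_sdiff]
      simp only [Dset, Finset.mem_filter, hpV, true_and]
      omega
    have hp1 : 1 ≤ p.1 ∧ p.1 ≤ m := by
      have := hpV
      simp only [Vset, Finset.mem_filter, Finset.mem_product, Finset.mem_Icc] at this
      exact ⟨this.1.1.1, this.1.1.2⟩
    have hb : ∀ h, 1 ≤ h → h + 1 ≤ 2*r+1 → A h (m - p.1) ≤ A (h+1) (m - p.1) :=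
      fun h h1 h2 => hA2 h h1 h2 (m - p.1) (by omega)
    have hc : ∀ h, 1 ≤ h → h + 1 ≤ 2*r+1 → A h (m - p.1 + 1) ≤ A (h+1) (m - p.1 + 1) :=
      fun h h1 h2 => hA2 h h1 h2 (m - p.1 + 1) (by omega)
    have key := key_comb r p.2 (fun h => A h (m - p.1)) (fun h => A h (m - p.1 + 1)) hb hc
    beta_reduce at key
    rw [Finset.card_filter, Finset.card_filter] at key
    simp only [hmem]
    omega
  · have : ∀ a : ℕ → ℕ, (p ∈ Vset m n \ Dset m n a) = False := by
      intro a
      simp only [eq_iff_iff, iff_false, Finset.mem_sdiff, not_and]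
      intro h; exact absurd h hpV
    simp [this]
end
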